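/- In Strings and Coins played on a forest in which every component contains at least one edge, the first player can capture all vertices of positive degree. -/

import Mathlib

/-- A position in Strings and Coins: a finite multigraph, with vertex set `verts`
and a multiset of (possibly loop) edges, each given as an ordered pair. -/
structure SCPos (V : Type) where
  verts : Finset V
  edges : Multiset (V × V)

variable {V : Type} [DecidableEq V]

/-- Number of edges incident to `v` (each edge, including a loop, counted once);
only being zero or nonzero matters for captures. -/
def SCPos.deg (p : SCPos V) (v : V) : ℕ :=
  (p.edges.filter (fun f => f.1 = v ∨ f.2 = v)).card

/-- Degree of `v`, where a loop at `v` contributes 2. -/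
def SCPos.degree (p : SCPos V) (v : V) : ℕ :=
  (p.edges.map (fun e => (if e.1 = v then 1 else 0) + (if e.2 = v then 1 else 0))).sum

/-- The position obtained by removing one copy of edge `e`. -/
def SCPos.remove (p : SCPos V) (e : V × V) : SCPos V :=
  ⟨p.verts, p.edges.erase e⟩

/-- The number of vertices captured by removing edge `e` from `p`:
endpoints of `e` whose degree drops to zero. -/
def SCPos.caps (p : SCPos V) (e : V × V) : ℕ :=
  (p.verts.filter (fun v => (v = e.1 ∨ v = e.2) ∧ (p.remove e).deg v = 0)).card

/-- Optimal score `(mover's points, opponent's points)` of Strings and Coins,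
under play where each player maximizes their own number of captured vertices.
A player who captures at least one vertex moves again. -/
noncomputable def SCPos.score (p : SCPos V) : ℕ × ℕ :=
  if h : p.edges = 0 then (0, 0)
  else
    (p.edges.toList.attach.map (fun ⟨e, he⟩ =>
      let s := (p.remove e).score
      let c := p.caps e
      if c = 0 then (s.2, s.1) else (s.1 + c, s.2))).foldl
      (fun best o => if best.1 ≤ o.1 then o else best) (0, 0)
termination_by p.edges.card
decreasing_by
  exact Multiset.card_erase_lt_of_mem (Multiset.mem_toList.mp he)

/-- The cycle graph `C_n` as a Strings and Coins position. -/
def cyclePos (n : ℕ) : SCPos ℕ :=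
  ⟨Finset.range n, ((List.range n).map (fun i => (i, (i + 1) % n)) : List (ℕ × ℕ))⟩

/-- The friendship graph `F_n`: `n` triangles sharing the common vertex `0`. -/
def friendshipPos (n : ℕ) : SCPos ℕ :=
  ⟨Finset.range (2 * n + 1),
   (((List.range n).flatMap fun i =>
      [(0, 2 * i + 1), (0, 2 * i + 2), (2 * i + 1, 2 * i + 2)]) : List (ℕ × ℕ))⟩

/-- The pinwheel graph `PW_n`: `n` copies of `C_4` sharing the common vertex `0`. -/
def pinwheelPos (n : ℕ) : SCPos ℕ :=
  ⟨Finset.range (3 * n + 1),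
   (((List.range n).flatMap fun i =>
      [(0, 3 * i + 1), (3 * i + 1, 3 * i + 2), (3 * i + 2, 3 * i + 3), (3 * i + 3, 0)]) :
     List (ℕ × ℕ))⟩

/-- The loopy star `L_n`: center `0`, outer vertices `1, …, n`, each joined to the
center by an edge and carrying one loop. -/
def loopyStarPos (n : ℕ) : SCPos ℕ :=
  ⟨Finset.range (n + 1),
   (((List.range n).flatMap fun i => [(0, i + 1), (i + 1, i + 1)]) : List (ℕ × ℕ))⟩

/-- The double loopy star `L(n,2)`: center `0`, outer vertices `1, …, n`, each joined
to the center by an edge and carrying two loops. -/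
def doubleLoopyStarPos (n : ℕ) : SCPos ℕ :=
  ⟨Finset.range (n + 1),
   (((List.range n).flatMap fun i => [(0, i + 1), (i + 1, i + 1), (i + 1, i + 1)]) :
     List (ℕ × ℕ))⟩

/-- The complete bipartite graph `K(1, b)` (a star with `b` leaves). -/
def starPos (b : ℕ) : SCPos ℕ :=
  ⟨Finset.range (b + 1), (((List.range b).map fun i => (0, i + 1)) : List (ℕ × ℕ))⟩

/-- The complete bipartite graph `K(2, b)`: part `{0, 1}` and part `{2, …, b+1}`. -/
def k2bPos (b : ℕ) : SCPos ℕ :=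
  ⟨Finset.range (b + 2),
   (((List.range b).flatMap fun j => [(0, j + 2), (1, j + 2)]) : List (ℕ × ℕ))⟩

/-- The balloon path `BP_n`: a path on vertices `0, …, n-1` with one loop at each vertex. -/
def balloonPathPos (n : ℕ) : SCPos ℕ :=
  ⟨Finset.range n,
   ((((List.range (n - 1)).map fun i => (i, i + 1)) ++
     ((List.range n).map fun i => (i, i))) : List (ℕ × ℕ))⟩

/-- The loopy cycle `C_(n,1)`: the cycle `C_n` with one extra loop at vertex `0`. -/
def loopyCyclePos (n : ℕ) : SCPos ℕ :=
  ⟨Finset.range n, (0, 0) ::ₘ (cyclePos n).edges⟩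

/-- The Strings and Coins position of a finite simple graph: all vertices,
and one (arbitrarily oriented) edge for each edge of the graph. -/
noncomputable def posOfGraph {W : Type} [Fintype W] [DecidableEq W]
    (G : SimpleGraph W) [DecidableRel G.Adj] : SCPos W :=
  ⟨Finset.univ, G.edgeFinset.val.map Quot.out⟩


open SimpleGraph in
lemma forest_leaf_edge {V : Type} [Fintype V] [DecidableEq V] (G : SimpleGraph V)
    (hF : G.IsAcyclic) (E : Finset (Sym2 V))
    (hE : ∀ e ∈ E, e ∈ G.edgeSet) (hne : E.Nonempty) :
    ∃ v, (E.filter (fun e => v ∈ e)).card = 1 := by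
  by_contra hcon
  push_neg at hcon
  have key : ∀ n : ℕ, ∃ (a b : V) (p : G.Walk a b), p.IsPath ∧ (∀ e ∈ p.edges, e ∈ E) ∧ p.length = n + 1 := by
    intro n
    induction n with
    | zero =>
      obtain ⟨e, he⟩ := hne
      induction e using Sym2.ind with
      | _ a b =>
        have hadj : G.Adj a b := hE _ he
        exact ⟨a, b, .cons hadj .nil, by simp [hadj.ne], by simpa using he, by simp⟩
    | succ n ih =>
      obtain ⟨a, b, p, hp, hpe, hlen⟩ := ih
      cases p with
      | nil => simp at hlen
      | cons h q =>
        rename_i x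
        have hfe : s(a, x) ∈ E := hpe _ (by simp)
        have h1 : 1 < (E.filter (fun e => a ∈ e)).card := by
          have hm : s(a,x) ∈ E.filter (fun e => a ∈ e) := by
            simp [Finset.mem_filter, hfe]
          have := Finset.card_pos.mpr ⟨_, hm⟩
          have := hcon a
          omega
        obtain ⟨e', he'mem, he'ne⟩ := Finset.exists_mem_ne h1 s(a,x)
        obtain ⟨he'E, he'a⟩ := Finset.mem_filter.mp he'mem
        obtain ⟨w, rfl⟩ := Sym2.mem_iff_exists.mp he'a
        have hadj : G.Adj a w := hE _ he'E
        by_cases hw : w ∈ (Walk.cons h q).support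
        · exfalso
          have hta : ((Walk.cons h q).takeUntil w hw).IsPath := hp.takeUntil hw
          have hequ := hF.path_unique ⟨_, hta⟩ (SimpleGraph.Path.singleton hadj)
          have hwalk : ((Walk.cons h q).takeUntil w hw) = (SimpleGraph.Path.singleton hadj : G.Walk a w) :=
            congrArg Subtype.val hequ
          have haw : a ≠ w := hadj.ne
          have hunf : (Walk.cons h q).takeUntil w hw = Walk.cons h (q.takeUntil w (by
              cases hw with
              | head => exact absurd rfl haw
              | tail _ h' => exact h')) := by
            rw [Walk.takeUntil]
            simp [haw]
          rw [hunf] at hwalk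
          have hedges := congrArg Walk.edges hwalk
          simp [SimpleGraph.Path.singleton] at hedges
          rcases hedges.1 with rfl | ⟨h1', -⟩
          · exact he'ne rfl
          · exact haw h1'
        · refine ⟨w, b, .cons hadj.symm (Walk.cons h q), by rw [Walk.cons_isPath_iff]; exact ⟨hp, hw⟩, ?_, by simp [hlen]⟩
          intro e he
          rw [Walk.edges_cons, List.mem_cons] at he
          rcases he with rfl | he
          · rwa [Sym2.eq_swap]
          · exact hpe _ he
  obtain ⟨a, b, p, hp, -, hlen⟩ := key (Fintype.card V)
  have := hp.length_lt
  omega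

def Good (p : SCPos V) : Prop :=
  (∀ e ∈ p.edges, e.1 ∈ p.verts ∧ e.2 ∈ p.verts) ∧
  (∀ S : Multiset (V × V), S ≤ p.edges → S ≠ 0 →
     ∃ v, (S.filter (fun f => f.1 = v ∨ f.2 = v)).card = 1)

lemma deg_remove (p : SCPos V) (e : V × V) (he : e ∈ p.edges) (v : V) :
    p.deg v = (p.remove e).deg v + (if e.1 = v ∨ e.2 = v then 1 else 0) := by
  unfold SCPos.deg SCPos.remove
  conv_lhs => rw [← Multiset.cons_erase he]
  rw [Multiset.filter_cons]
  split_ifs with h <;> simp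

lemma caps_key (p : SCPos V) (e : V × V) (he : e ∈ p.edges) :
    (p.verts.filter fun v => (p.remove e).deg v ≠ 0).card + p.caps e
      = (p.verts.filter fun v => p.deg v ≠ 0).card := by
  rw [SCPos.caps, ← Finset.card_union_of_disjoint]
  · congr 1
    ext v
    simp only [Finset.mem_union, Finset.mem_filter]
    have hd := deg_remove p e he v
    constructor
    · rintro (⟨hv, h0⟩ | ⟨hv, hinc, h0⟩)
      · refine ⟨hv, ?_⟩
        split_ifs at hd <;> omega
      · refine ⟨hv, ?_⟩
        have hcond : e.1 = v ∨ e.2 = v := by tauto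
        rw [if_pos hcond] at hd
        omega
    · rintro ⟨hv, h0⟩
      by_cases hr : (p.remove e).deg v = 0
      · refine Or.inr ⟨hv, ?_, hr⟩
        rw [hr] at hd
        split_ifs at hd with h'
        · tauto
        · omega
      · exact Or.inl ⟨hv, hr⟩
  · rw [Finset.disjoint_filter]
    rintro v - h ⟨-, h0⟩
    exact h h0

lemma foldl_reach (k : ℕ) :
    ∀ (L : List (ℕ × ℕ)) (acc : ℕ × ℕ),
      (∀ x ∈ L, x.1 ≤ k ∧ (x.1 = k → x.2 = 0)) →
      acc.1 ≤ k → (acc.1 = k → acc.2 = 0) →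
      ((k, 0) ∈ L ∨ acc = (k, 0)) →
      L.foldl (fun best o => if best.1 ≤ o.1 then o else best) acc = (k, 0) := by
  intro L
  induction L with
  | nil =>
    intro acc _ _ _ h
    simpa using h
  | cons x L ih =>
    intro acc hall hle hk hmem
    rw [List.foldl_cons]
    have hx := hall x (by simp)
    refine ih _ (fun y hy => hall y (by simp [hy])) ?_ ?_ ?_
    · split_ifs <;> omega
    · split_ifs <;> tauto
    · rcases hmem with hmem | rfl
      · rw [List.mem_cons] at hmem
        rcases hmem with rfl | hmem
        · right; simp [hle]
        · exact Or.inl hmem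
      · split_ifs with h'
        · right
          have : x.1 = k := le_antisymm hx.1 h'
          have := hx.2 this
          ext <;> simp [this, ‹x.1 = k›]
        · right; rfl

lemma score_eq (p : SCPos V) (hG : Good p) :
    p.score = ((p.verts.filter fun v => p.deg v ≠ 0).card, 0) := by
  rw [SCPos.score]
  by_cases h0 : p.edges = 0
  · rw [dif_pos h0]
    have : ∀ v, p.deg v = 0 := by intro v; simp [SCPos.deg, h0]
    simp [this]
  · rw [dif_neg h0]
    set k := (p.verts.filter fun v => p.deg v ≠ 0).card with hk
    -- each option characterization
    have hopt : ∀ e (he : e ∈ p.edges),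
        (let s := (p.remove e).score
         let c := p.caps e
         if c = 0 then (s.2, s.1) else (s.1 + c, s.2))
          = (if p.caps e = 0 then (0, k) else (k, 0)) := by
      intro e he
      have hGr : Good (p.remove e) := by
        constructor
        · intro f hf
          exact hG.1 f (Multiset.mem_of_mem_erase hf)
        · intro S hS hS0
          exact hG.2 S (hS.trans (Multiset.erase_le _ _)) hS0
      have hs : (p.remove e).score
          = (((p.remove e).verts.filter fun v => (p.remove e).deg v ≠ 0).card, 0) :=
        score_eq (p.remove e) hGr
      have hck := caps_key p e he
      have hv : (p.remove e).verts = p.verts := rfl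
      rw [hv] at hs
      have hBk : (p.verts.filter fun v => (p.remove e).deg v ≠ 0).card + p.caps e = k := by
        rw [hk]; exact hck
      dsimp only
      split_ifs with hc
      · rw [hs]
        refine Prod.ext rfl ?_
        show (p.verts.filter fun v => (p.remove e).deg v ≠ 0).card = k
        omega
      · rw [hs]
        refine Prod.ext ?_ rfl
        show (p.verts.filter fun v => (p.remove e).deg v ≠ 0).card + p.caps e = k
        omega
    -- a capturing edge exists
    obtain ⟨v, hv1⟩ := hG.2 p.edges le_rfl h0
    have hvfilter : ∃ e, e ∈ p.edges.filter (fun f => f.1 = v ∨ f.2 = v) := by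
      rw [← Multiset.card_pos_iff_exists_mem, hv1]; norm_num
    obtain ⟨e₀, he₀f⟩ := hvfilter
    have he₀ : e₀ ∈ p.edges := Multiset.mem_of_mem_filter he₀f
    have he₀v : e₀.1 = v ∨ e₀.2 = v := (Multiset.mem_filter.mp he₀f).2
    have hcaps₀ : p.caps e₀ ≠ 0 := by
      have hdv : p.deg v = 1 := hv1
      have hrd : (p.remove e₀).deg v = 0 := by
        have := deg_remove p e₀ he₀ v
        rw [if_pos he₀v] at this
        omega
      have hvverts : v ∈ p.verts := by
        rcases he₀v with h | h
        · rw [← h]; exact (hG.1 e₀ he₀).1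
        · rw [← h]; exact (hG.1 e₀ he₀).2
      have : v ∈ p.verts.filter (fun v => (v = e₀.1 ∨ v = e₀.2) ∧ (p.remove e₀).deg v = 0) := by
        rw [Finset.mem_filter]
        exact ⟨hvverts, by tauto, hrd⟩
      have := Finset.card_pos.mpr ⟨_, this⟩
      rw [SCPos.caps]
      omega
    apply foldl_reach
    · rintro x hx
      rw [List.mem_map] at hx
      obtain ⟨⟨e, he⟩, -, rfl⟩ := hx
      dsimp only
      rw [hopt e (Multiset.mem_toList.mp he)]
      split_ifs <;> simp <;> omega
    · simp
    · simp
    · left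
      rw [List.mem_map]
      have he₀l : e₀ ∈ p.edges.toList := Multiset.mem_toList.mpr he₀
      refine ⟨⟨e₀, he₀l⟩, List.mem_attach _ _, ?_⟩
      dsimp only
      rw [hopt e₀ he₀, if_neg hcaps₀]
termination_by p.edges.card
decreasing_by
  exact Multiset.card_erase_lt_of_mem he

/-- On any finite forest, the first player captures all vertices of positive degree
(components that are isolated vertices contribute nothing). -/
theorem stmt2 {V : Type} [Fintype V] [DecidableEq V] (G : SimpleGraph V)
    [DecidableRel G.Adj] (hF : G.IsAcyclic) :
    (SCPos.mk (Finset.univ.filter fun v => 0 < G.degree v)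
        (G.edgeFinset.val.map Quot.out)).score
      = ((Finset.univ.filter fun v : V => 0 < G.degree v).card, 0) := by
  classical
  set p : SCPos V := SCPos.mk (Finset.univ.filter fun v => 0 < G.degree v)
      (G.edgeFinset.val.map Quot.out) with hp
  have hmem : ∀ f : V × V, f ∈ p.edges → G.Adj f.1 f.2 := by
    intro f hf
    obtain ⟨E, hE, rfl⟩ := Multiset.mem_map.mp hf
    have hout : Sym2.mk.uncurry (Quot.out E) = E := Quot.out_eq E
    have : E ∈ G.edgeSet := SimpleGraph.mem_edgeFinset.mp hE
    rw [← hout] at this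
    exact this
  have hGood : Good p := by
    constructor
    · intro f hf
      have hadj := hmem f hf
      constructor
      · simp only [hp, Finset.mem_filter, Finset.mem_univ, true_and]
        exact G.degree_pos_iff_exists_adj f.1 |>.mpr ⟨f.2, hadj⟩
      · simp only [hp, Finset.mem_filter, Finset.mem_univ, true_and]
        exact G.degree_pos_iff_exists_adj f.2 |>.mpr ⟨f.1, hadj.symm⟩
    · intro S hS hS0
      have hmapeq : (G.edgeFinset.val.map Quot.out).map Sym2.mk.uncurry = G.edgeFinset.val := by
        rw [Multiset.map_map]
        have hco : (Sym2.mk.uncurry ∘ Quot.out : Sym2 V → Sym2 V) = id := funext fun E => Quot.out_eq E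
        rw [hco, Multiset.map_id]
      have hT : S.map Sym2.mk.uncurry ≤ G.edgeFinset.val := by
        calc S.map Sym2.mk.uncurry ≤ p.edges.map Sym2.mk.uncurry := Multiset.map_le_map hS
        _ = G.edgeFinset.val := hmapeq
      have hnd : (S.map Sym2.mk.uncurry).Nodup := Multiset.nodup_of_le hT G.edgeFinset.nodup
      set E' : Finset (Sym2 V) := ⟨S.map Sym2.mk.uncurry, hnd⟩ with hE'
      have hsub : ∀ e ∈ E', e ∈ G.edgeSet := by
        intro e he
        have : e ∈ G.edgeFinset.val := Multiset.subset_of_le hT he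
        rwa [← SimpleGraph.mem_edgeFinset]
      have hne : E'.Nonempty := by
        obtain ⟨f, hf⟩ := Multiset.exists_mem_of_ne_zero hS0
        exact ⟨Sym2.mk.uncurry f, Multiset.mem_map_of_mem _ hf⟩
      obtain ⟨v, hv⟩ := forest_leaf_edge G hF E' hsub hne
      refine ⟨v, ?_⟩
      have hval : (E'.filter (fun e => v ∈ e)).card
          = ((S.map Sym2.mk.uncurry).filter (fun e => v ∈ e)).card := rfl
      rw [hval, Multiset.filter_map, Multiset.card_map] at hv
      rw [← hv]
      congr 1
      apply Multiset.filter_congr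
      intro f hf
      show (f.1 = v ∨ f.2 = v) ↔ v ∈ Sym2.mk.uncurry f
      rw [show Sym2.mk.uncurry f = s(f.1, f.2) from rfl, Sym2.mem_iff]
      tauto
  rw [score_eq p hGood]
  congr 1
  rw [Finset.filter_eq_self.mpr]
  intro v hv
  have hdeg : 0 < G.degree v := by
    simpa [hp] using hv
  obtain ⟨w, hadj⟩ := (G.degree_pos_iff_exists_adj v).mp hdeg
  have hE : s(v, w) ∈ G.edgeFinset := by
    rwa [SimpleGraph.mem_edgeFinset, SimpleGraph.mem_edgeSet]
  have hf : Quot.out s(v, w) ∈ p.edges := Multiset.mem_map_of_mem _ hE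
  have hout : Sym2.mk.uncurry (Quot.out s(v, w)) = s(v, w) := Quot.out_eq _
  have hinc : (Quot.out s(v, w)).1 = v ∨ (Quot.out s(v, w)).2 = v := by
    have : v ∈ Sym2.mk.uncurry (Quot.out s(v, w)) := by rw [hout]; exact Sym2.mem_mk_left v w
    rw [show Sym2.mk.uncurry (Quot.out s(v,w)) = s((Quot.out s(v,w)).1, (Quot.out s(v,w)).2) from rfl,
      Sym2.mem_iff] at this
    tauto
  have hpos : 0 < p.deg v := by
    rw [SCPos.deg, Multiset.card_pos_iff_exists_mem]
    exact ⟨_, Multiset.mem_filter.mpr ⟨hf, hinc⟩⟩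
  omega
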